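/- Let J be an ideal on ω and (I_n)_{n∈ω} be a sequence of ideals on ω. If {n ∈ ω : I_n is not Egorov} ∉ J, then the ideal ∑^J_{n∈ω} I_n is not Egorov. -/

import Mathlib

open MeasureTheory Set

/-- An ideal on a (countable) set `X`. -/
def IsIdeal {X : Type} (I : Set (Set X)) : Prop :=
  (∀ A B : Set X, A ∈ I → B ∈ I → A ∪ B ∈ I) ∧
  (∀ A B : Set X, A ⊆ B → B ∈ I → A ∈ I) ∧
  (∀ A : Set X, A.Finite → A ∈ I) ∧
  (Set.univ : Set X) ∉ I

/-- `I`-pointwise convergence on `[0,1]` of a family of functions. -/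
def IConvPtwise {X : Type} (I : Set (Set X)) (f : X → ℝ → ℝ) (g : ℝ → ℝ) : Prop :=
  ∀ t ∈ Icc (0:ℝ) 1, ∀ ε : ℝ, 0 < ε → {a : X | ε ≤ |f a t - g t|} ∈ I

/-- `I`-uniform convergence on `M` of a family of functions. -/
def IConvUnif {X : Type} (I : Set (Set X)) (f : X → ℝ → ℝ) (g : ℝ → ℝ) (M : Set ℝ) : Prop :=
  ∀ ε : ℝ, 0 < ε → {a : X | ∃ t ∈ M, ε ≤ |f a t - g t|} ∈ I

/-- `I` is an Egorov ideal. -/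
def IsEgorov {X : Type} (I : Set (Set X)) : Prop :=
  ∀ (f : X → ℝ → ℝ) (g : ℝ → ℝ),
    (∀ a : X, AEMeasurable (f a) (volume.restrict (Icc (0:ℝ) 1))) →
    AEMeasurable g (volume.restrict (Icc (0:ℝ) 1)) →
    IConvPtwise I f g →
    ∀ η : ℝ, 0 < η →
      ∃ M : Set ℝ, M ⊆ Icc (0:ℝ) 1 ∧ NullMeasurableSet M volume ∧
        volume (Icc (0:ℝ) 1 \ M) < ENNReal.ofReal η ∧
        IConvUnif I f g M

def IsSubmeasure (φ : Set ℕ → ENNReal) : Prop :=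
  φ ∅ = 0 ∧ (∀ n : ℕ, φ {n} < ⊤) ∧
  ∀ A B : Set ℕ, φ A ≤ φ (A ∪ B) ∧ φ (A ∪ B) ≤ φ A + φ B

def IsLscSubmeasure (φ : Set ℕ → ENNReal) : Prop :=
  ∀ A : Set ℕ, φ A = ⨆ n : ℕ, φ (A ∩ Iio n)

def IsNonpathological (φ : Set ℕ → ENNReal) : Prop :=
  ∀ A : Set ℕ, φ A = ⨆ (μ : Measure ℕ) (_ : ∀ B : Set ℕ, μ B ≤ φ B), μ A

/-- `I` is a non-pathological Σ⁰₂ ideal: `I = Fin(φ)` for some non-pathological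
lsc submeasure `φ` with `φ(ω) = ∞`. -/
def IsNonpathSigma2 (I : Set (Set ℕ)) : Prop :=
  ∃ φ : Set ℕ → ENNReal, IsSubmeasure φ ∧ IsLscSubmeasure φ ∧ IsNonpathological φ ∧
    φ Set.univ = ⊤ ∧ I = {A : Set ℕ | φ A < ⊤}

def IdealCountablyGenerated {X : Type} (I : Set (Set X)) : Prop :=
  ∃ B : Set (Set X), B.Countable ∧ B ⊆ I ∧
    ∀ A ∈ I, ∃ F : Set (Set X), F ⊆ B ∧ F.Finite ∧ A ⊆ ⋃₀ F

def IdealIso {X Y : Type} (I : Set (Set X)) (J : Set (Set Y)) : Prop :=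
  ∃ f : Y → X, Function.Bijective f ∧ ∀ A : Set X, (A ∈ I ↔ f ⁻¹' A ∈ J)

def RKle {X Y : Type} (I : Set (Set X)) (J : Set (Set Y)) : Prop :=
  ∃ f : Y → X, ∀ A : Set X, (A ∈ I ↔ f ⁻¹' A ∈ J)

def RBle {X Y : Type} (I : Set (Set X)) (J : Set (Set Y)) : Prop :=
  ∃ f : Y → X, (∀ x : X, (f ⁻¹' {x}).Finite) ∧ ∀ A : Set X, (A ∈ I ↔ f ⁻¹' A ∈ J)

/-- The restriction `I↾A` of an ideal, as an ideal on the subtype `↥A`. -/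
def restrictIdeal {X : Type} (I : Set (Set X)) (A : Set X) : Set (Set ↥A) :=
  {S : Set ↥A | (Subtype.val '' S) ∈ I}

def IsTall {X : Type} (I : Set (Set X)) : Prop :=
  ∀ A : Set X, A.Infinite → ∃ B ∈ I, B.Infinite ∧ B ⊆ A

/-- The `J`-sum `∑^J_{n∈ω} I_n` on `ω²`: sets whose `I_n`-positive sections form a `J`-set. -/
def idealSumOver (J : Set (Set ℕ)) (I : ℕ → Set (Set ℕ)) : Set (Set (ℕ × ℕ)) :=
  {M : Set (ℕ × ℕ) | {n : ℕ | {k : ℕ | (n, k) ∈ M} ∉ I n} ∈ J}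

/-- The identification of `P(X)` with the Cantor space `2^X`. -/
def idealChar {X : Type} (I : Set (Set X)) : Set (X → Bool) :=
  {x : X → Bool | {a : X | x a = true} ∈ I}

/-- An ideal on `ω` is analytic if it is an analytic subset of the Cantor space `2^ω`. -/
def IsAnalyticIdeal (I : Set (Set ℕ)) : Prop := MeasureTheory.AnalyticSet (idealChar I)

private lemma vol_preimage_affine (c d : ℝ) (hc : c ≠ 0) (S : Set ℝ) :
    volume ((fun x => d + c * x) ⁻¹' S) = ENNReal.ofReal |c⁻¹| * volume S := by
  have h : (fun x : ℝ => d + c * x) ⁻¹' S = (c * ·) ⁻¹' ((d + ·) ⁻¹' S) := rfl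
  rw [h, Real.volume_preimage_mul_left hc, measure_preimage_add]

lemma ideal_subset {X : Type} {I : Set (Set X)} (hI : IsIdeal I) {A B : Set X}
    (h : A ⊆ B) (hB : B ∈ I) : A ∈ I := hI.2.1 A B h hB

lemma ideal_empty {X : Type} {I : Set (Set X)} (hI : IsIdeal I) : (∅ : Set X) ∈ I :=
  hI.2.2.1 ∅ finite_empty

lemma ideal_biUnion {X : Type} {I : Set (Set X)} (hI : IsIdeal I) {ι : Type}
    (s : Finset ι) {f : ι → Set X} (h : ∀ i ∈ s, f i ∈ I) : (⋃ i ∈ s, f i) ∈ I := by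
  classical
  induction s using Finset.induction_on with
  | empty => simpa using ideal_empty hI
  | @insert a s' hx ih =>
    rw [Finset.set_biUnion_insert]
    exact hI.1 _ _ (h a (Finset.mem_insert_self a s'))
      (ih fun i hi => h i (Finset.mem_insert_of_mem hi))

/-- composition with an affine map keeps AEMeasurability on `[0,1]` (mapped into `[a,b] ⊆ [0,1]`). -/
lemma aemeas_comp_affine {φ : ℝ → ℝ} {a b : ℝ} (ha : 0 ≤ a) (hab : a < b) (hb : b ≤ 1)
    (hφ : AEMeasurable φ (volume.restrict (Icc 0 1))) :
    AEMeasurable (fun t => φ (a + (b - a) * t)) (volume.restrict (Icc (0:ℝ) 1)) := by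
  have hc : b - a ≠ 0 := sub_ne_zero.2 hab.ne'
  set L : ℝ → ℝ := fun t => a + (b - a) * t with hL
  have hLmeas : Measurable L := by fun_prop
  have hsub : Icc a b ⊆ Icc (0:ℝ) 1 := Icc_subset_Icc ha hb
  have h1 : AEMeasurable φ (volume.restrict (Icc a b)) :=
    hφ.mono_ac (Measure.absolutelyContinuous_of_le
      (Measure.restrict_mono hsub le_rfl))
  have hLmaps : ∀ t ∈ Icc (0:ℝ) 1, L t ∈ Icc a b := by
    intro t ht
    constructor <;> simp only [hL] <;> nlinarith [ht.1, ht.2, sub_pos.2 hab]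
  have hac : (volume.restrict (Icc (0:ℝ) 1)).map L ≪ volume.restrict (Icc a b) := by
    refine Measure.AbsolutelyContinuous.mk fun s hs hs0 => ?_
    rw [Measure.map_apply hLmeas hs, Measure.restrict_apply (hLmeas hs)]
    rw [Measure.restrict_apply hs] at hs0
    have hsubs : L ⁻¹' s ∩ Icc 0 1 ⊆ L ⁻¹' (s ∩ Icc a b) := by
      intro t ⟨hts, ht⟩
      exact ⟨hts, hLmaps t ht⟩
    refine le_antisymm (le_trans (measure_mono hsubs) ?_) zero_le
    rw [hL]
    have := vol_preimage_affine (b - a) a hc (s ∩ Icc a b)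
    simp only [this, hs0, mul_zero, le_refl]
  exact (h1.mono_ac hac).comp_aemeasurable hLmeas.aemeasurable


def badSet (f : ℕ → ℝ → ℝ) (g : ℝ → ℝ) (ε : ℝ) (M : Set ℝ) : Set ℕ :=
  {k | ∃ t ∈ M, ε ≤ |f k t - g t|}


lemma subC {I : Set (Set ℕ)} (hI : IsIdeal I) {f : ℕ → ℝ → ℝ} {g : ℝ → ℝ}
    (hf : ∀ k, AEMeasurable (f k) (volume.restrict (Icc 0 1)))
    (hg : AEMeasurable g (volume.restrict (Icc 0 1)))
    (hp : IConvPtwise I f g)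
    (H : ∀ h : ℕ → ℝ → ℝ, (∀ k, AEMeasurable (h k) (volume.restrict (Icc 0 1))) →
      IConvPtwise I h (fun _ => 0) →
      ∃ M, M ⊆ Icc (0:ℝ) 1 ∧ NullMeasurableSet M volume ∧
        volume (Icc 0 1 \ M) < ENNReal.ofReal (1/2) ∧
        badSet h (fun _ => 0) (1/2) M ∈ I)
    (j : ℕ) {a b : ℝ} (ha : 0 ≤ a) (hab : a < b) (hb : b ≤ 1) :
    ∃ M, M ⊆ Icc a b ∧ NullMeasurableSet M volume ∧
      volume (Icc a b \ M) < ENNReal.ofReal ((b - a)/2) ∧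
      badSet f g (1/(2:ℝ)^(j+2)) M ∈ I := by
  have hc : (0:ℝ) < b - a := sub_pos.2 hab
  set c := b - a with hcdef
  set L : ℝ → ℝ := fun t => a + c * t with hL
  set Linv : ℝ → ℝ := fun x => -(a/c) + c⁻¹ * x with hLinv
  have hLLinv : ∀ x, L (Linv x) = x := by
    intro x; simp only [hL, hLinv]; field_simp; ring
  have hLmaps : ∀ t ∈ Icc (0:ℝ) 1, L t ∈ Icc a b := by
    intro t ht
    constructor <;> simp only [hL] <;> nlinarith [ht.1, ht.2]
  have hLinvmaps : ∀ x ∈ Icc a b, Linv x ∈ Icc (0:ℝ) 1 := by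
    intro x hx
    have h1 : Linv x = (x - a) / c := by simp only [hLinv]; field_simp; ring
    constructor <;> rw [h1]
    · exact div_nonneg (by linarith [hx.1]) hc.le
    · rw [div_le_one hc]; linarith [hx.2]
  have hLinvmaps' : ∀ x, Linv x ∈ Icc (0:ℝ) 1 → x ∈ Icc a b := by
    intro x hx
    have h1 : Linv x = (x - a) / c := by simp only [hLinv]; field_simp; ring
    rw [h1] at hx
    obtain ⟨h2, h3⟩ := hx
    rw [div_le_one hc] at h3
    have h4 := (div_nonneg_iff.1 h2)
    constructor
    · rcases h4 with ⟨h5, _⟩ | ⟨_, h6⟩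
      · linarith
      · linarith
    · linarith
  -- the rescaled family
  set h : ℕ → ℝ → ℝ := fun k t => 2^(j+1) * (f k (L t) - g (L t)) with hh
  have hpow : (0:ℝ) < 2^(j+1) := by positivity
  have hmeas : ∀ k, AEMeasurable (h k) (volume.restrict (Icc 0 1)) := by
    intro k
    exact (((aemeas_comp_affine ha hab hb (hf k)).sub
      (aemeas_comp_affine ha hab hb hg)).const_mul _)
  have hptw : IConvPtwise I h (fun _ => 0) := by
    intro t ht ε hε
    have hm := hp (L t) (Icc_subset_Icc ha hb (hLmaps t ht)) (ε / 2^(j+1))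
      (div_pos hε hpow)
    refine ideal_subset hI ?_ hm
    intro k hk
    simp only [mem_setOf_eq, sub_zero, hh] at hk ⊢
    rw [abs_mul, abs_of_pos hpow] at hk
    rw [div_le_iff₀ hpow]; linarith
  obtain ⟨M', hM'sub, hM'null, hM'vol, hM'bad⟩ := H h hmeas hptw
  refine ⟨Linv ⁻¹' M', ?_, ?_, ?_, ?_⟩
  · intro x hx; exact hLinvmaps' x (hM'sub hx)
  · -- null measurability
    have hBmeas : MeasurableSet (toMeasurable volume M') := measurableSet_toMeasurable _ _
    have hae : M' =ᵐ[volume] toMeasurable volume M' := (NullMeasurableSet.toMeasurable_ae_eq hM'null).symm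
    have hLinvmeas : Measurable Linv := by
      simp only [hLinv]; fun_prop
    have key : ∀ S : Set ℝ, volume S = 0 → volume (Linv ⁻¹' S) = 0 := by
      intro S hS
      simp only [hLinv]
      rw [vol_preimage_affine c⁻¹ (-(a/c)) (inv_ne_zero hc.ne') S, hS, mul_zero]
    have : Linv ⁻¹' M' =ᵐ[volume] Linv ⁻¹' (toMeasurable volume M') := by
      rw [ae_eq_set] at hae ⊢
      constructor
      · rw [← preimage_diff]; exact key _ hae.1
      · rw [← preimage_diff]; exact key _ hae.2
    exact (hBmeas.preimage hLinvmeas).nullMeasurableSet.congr this.symm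
  · -- measure bound
    have hsub3 : Icc a b \ Linv ⁻¹' M' ⊆ Linv ⁻¹' (Icc 0 1 \ M') := by
      intro x ⟨hx1, hx2⟩
      exact ⟨hLinvmaps x hx1, hx2⟩
    refine lt_of_le_of_lt (measure_mono hsub3) ?_
    have heq := vol_preimage_affine c⁻¹ (-(a/c)) (inv_ne_zero hc.ne') (Icc 0 1 \ M')
    simp only [hLinv, heq, inv_inv, abs_of_pos hc]
    calc ENNReal.ofReal c * volume (Icc 0 1 \ M')
        < ENNReal.ofReal c * ENNReal.ofReal (1/2) := by
          refine (ENNReal.mul_lt_mul_iff_right ?_ ?_).2 hM'vol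
          · simp [ENNReal.ofReal_eq_zero]; linarith
          · exact ENNReal.ofReal_ne_top
      _ = ENNReal.ofReal (c/2) := by
          rw [← ENNReal.ofReal_mul hc.le]; ring_nf
  · -- bad set
    refine ideal_subset hI ?_ hM'bad
    rintro k ⟨x, hxM, hxk⟩
    refine ⟨Linv x, hxM, ?_⟩
    simp only [hh, sub_zero, hLLinv x]
    rw [abs_mul, abs_of_pos hpow]
    have : (1:ℝ)/2^(j+2) * 2^(j+1) = 1/2 := by
      rw [pow_succ]; field_simp
    calc (1:ℝ)/2 = 2^(j+1) * (1/2^(j+2)) := by rw [pow_succ]; field_simp; ring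
      _ ≤ 2^(j+1) * |f k x - g x| := by
          exact mul_le_mul_of_nonneg_left hxk hpow.le


open Classical in
lemma dyadic_cover (C : Set ℝ) (hC : C ⊆ Ioo 0 1) {δ : ℝ} (hδ : 0 < δ) :
    ∃ (N : ℕ) (S : Finset ℕ),
      (∀ i ∈ S, Icc ((i:ℝ)/2^N) (((i:ℝ)+1)/2^N) ⊆ Ioo 0 1) ∧
      volume (C \ ⋃ i ∈ S, Icc ((i:ℝ)/2^N) (((i:ℝ)+1)/2^N)) ≤ ENNReal.ofReal δ ∧
      (S.card : ℝ) / 2^N ≤ (volume C).toReal + 2*δ := by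
  have hCfin : volume C < ⊤ :=
    lt_of_le_of_lt (measure_mono (hC.trans Ioo_subset_Icc_self))
      (by rw [Real.volume_Icc]; exact ENNReal.ofReal_lt_top.trans_le le_top)
  obtain ⟨U0, hU0sup, hU0open, hU0vol⟩ := Set.exists_isOpen_lt_of_lt C
    (volume C + ENNReal.ofReal δ)
    (ENNReal.lt_add_right hCfin.ne (by simpa using hδ))
  set U : Set ℝ := U0 ∩ Ioo 0 1 with hU
  have hUopen : IsOpen U := hU0open.inter isOpen_Ioo
  have hUsup : C ⊆ U := fun x hx => ⟨hU0sup hx, hC hx⟩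
  have hUvol : volume U < volume C + ENNReal.ofReal δ :=
    lt_of_le_of_lt (measure_mono inter_subset_left) hU0vol
  have hUfin : volume U ≠ ⊤ := (hUvol.trans_le le_top).ne
  set D : ℕ → ℕ → Set ℝ := fun N i => Icc ((i:ℝ)/2^N) (((i:ℝ)+1)/2^N) with hD
  set SN : ℕ → Finset ℕ := fun N => (Finset.range (2^N)).filter (fun i => D N i ⊆ U) with hSN
  set V : ℕ → Set ℝ := fun N => ⋃ i ∈ SN N, D N i with hV
  have hVsubU : ∀ N, V N ⊆ U := by
    intro N x hx
    simp only [hV, mem_iUnion] at hx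
    obtain ⟨i, hi, hxi⟩ := hx
    exact (Finset.mem_filter.1 hi).2 hxi
  have hVmeas : ∀ N, MeasurableSet (V N) := fun N =>
    MeasurableSet.biUnion (Finset.countable_toSet _) fun i _ => measurableSet_Icc
  have hhalf : ∀ N i, D N i = D (N+1) (2*i) ∪ D (N+1) (2*i+1) := by
    intro N i
    have hp : (0:ℝ) < 2^N := by positivity
    have e1 : ((2*i:ℕ):ℝ)/2^(N+1) = (i:ℝ)/2^N := by
      push_cast; rw [pow_succ]; field_simp
    have e2 : (((2*i:ℕ):ℝ)+1)/2^(N+1) = ((2*i+1:ℕ):ℝ)/2^(N+1) := by push_cast; ring_nf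
    have e3 : (((2*i+1:ℕ):ℝ)+1)/2^(N+1) = ((i:ℝ)+1)/2^N := by
      push_cast; rw [pow_succ]; field_simp; ring
    show Icc _ _ = Icc _ _ ∪ Icc _ _
    rw [e1, e2, e3, Icc_union_Icc_eq_Icc]
    · rw [← e1, ← e2]
      have : ((2*i:ℕ):ℝ) ≤ ((2*i:ℕ):ℝ)+1 := by linarith
      calc ((2*i:ℕ):ℝ)/2^(N+1) ≤ (((2*i:ℕ):ℝ)+1)/2^(N+1) := by gcongr
        _ = _ := rfl
    · rw [← e3]
      have : ((2*i+1:ℕ):ℝ) ≤ ((2*i+1:ℕ):ℝ)+1 := by linarith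
      calc ((2*i+1:ℕ):ℝ)/2^(N+1) ≤ (((2*i+1:ℕ):ℝ)+1)/2^(N+1) := by gcongr
        _ = _ := rfl
  have hVmono : Monotone V := by
    apply monotone_nat_of_le_succ
    intro N x hx
    simp only [hV, mem_iUnion] at hx ⊢
    obtain ⟨i, hi, hxi⟩ := hx
    rw [hhalf N i] at hxi
    have hisub : D N i ⊆ U := (Finset.mem_filter.1 hi).2
    have hirange : i < 2^N := Finset.mem_range.1 (Finset.mem_filter.1 hi).1
    have hsub1 : D (N+1) (2*i) ⊆ D N i := by rw [hhalf N i]; exact subset_union_left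
    have hsub2 : D (N+1) (2*i+1) ⊆ D N i := by rw [hhalf N i]; exact subset_union_right
    rcases hxi with hxi | hxi
    · exact ⟨2*i, Finset.mem_filter.2 ⟨Finset.mem_range.2 (by rw [pow_succ]; omega),
        hsub1.trans hisub⟩, hxi⟩
    · exact ⟨2*i+1, Finset.mem_filter.2 ⟨Finset.mem_range.2 (by rw [pow_succ]; omega),
        hsub2.trans hisub⟩, hxi⟩
  have hVunion : (⋃ N, V N) = U := by
    refine subset_antisymm (iUnion_subset hVsubU) ?_
    intro x hx
    obtain ⟨ε, hε, hball⟩ := Metric.isOpen_iff.1 hUopen x hx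
    obtain ⟨N, hN⟩ := exists_pow_lt_of_lt_one hε (by norm_num : (1:ℝ)/2 < 1)
    have h2N : (1:ℝ)/2^N < ε := by rwa [div_pow, one_pow] at hN
    have hx01 : x ∈ Ioo (0:ℝ) 1 := hx.2
    set i : ℕ := ⌊x * 2^N⌋₊ with hi
    have hpos : (0:ℝ) < 2^N := by positivity
    have hxnn : (0:ℝ) ≤ x * 2^N := by nlinarith [hx01.1]
    have hile : (i:ℝ) ≤ x * 2^N := Nat.floor_le hxnn
    have hilt : x * 2^N < (i:ℝ) + 1 := Nat.lt_floor_add_one _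
    have hirange : i < 2^N := by
      rw [hi]
      refine (Nat.floor_lt hxnn).2 ?_
      push_cast
      nlinarith [hx01.2]
    have hmem : x ∈ D N i := by
      constructor
      · rw [div_le_iff₀ hpos]; linarith
      · rw [le_div_iff₀ hpos]; linarith
    have hDsub : D N i ⊆ U := by
      intro y hy
      apply hball
      rw [Metric.mem_ball, Real.dist_eq, abs_lt]
      have h1 : (i:ℝ)/2^N ≤ y := hy.1
      have h2 : y ≤ ((i:ℝ)+1)/2^N := hy.2
      have h3 : (i:ℝ)/2^N ≤ x := by rw [div_le_iff₀ hpos]; linarith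
      have h4 : x ≤ ((i:ℝ)+1)/2^N := by rw [le_div_iff₀ hpos]; linarith
      have h5 : ((i:ℝ)+1)/2^N - (i:ℝ)/2^N = 1/2^N := by field_simp; ring
      constructor <;> nlinarith
    exact mem_iUnion.2 ⟨N, mem_iUnion.2 ⟨i, mem_iUnion.2
      ⟨Finset.mem_filter.2 ⟨Finset.mem_range.2 hirange, hDsub⟩, hmem⟩⟩⟩
  -- choose N with volume (U \ V N) ≤ δ
  have hkey : ∃ N, volume (U \ V N) ≤ ENNReal.ofReal δ := by
    by_cases hcase : volume U ≤ ENNReal.ofReal δ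
    · exact ⟨0, le_trans (measure_mono diff_subset) hcase⟩
    · push_neg at hcase
      have hsup : volume U = ⨆ N, volume (V N) := by
        rw [← hVunion]; exact hVmono.measure_iUnion
      have : volume U - ENNReal.ofReal δ < ⨆ N, volume (V N) := by
        rw [← hsup]
        refine ENNReal.sub_lt_self hUfin ?_ ?_
        · exact (lt_of_le_of_lt zero_le hcase).ne'
        · simp only [ne_eq, ENNReal.ofReal_eq_zero, not_le]; linarith
      obtain ⟨N, hN⟩ := lt_iSup_iff.1 this
      refine ⟨N, ?_⟩
      rw [measure_diff (hVsubU N) (hVmeas N).nullMeasurableSet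
        (lt_of_le_of_lt (measure_mono (hVsubU N)) (lt_top_iff_ne_top.2 hUfin)).ne]
      rw [tsub_le_iff_right]
      have : volume U ≤ (volume U - ENNReal.ofReal δ) + ENNReal.ofReal δ :=
        le_tsub_add
      exact this.trans (by rw [add_comm]; exact add_le_add_right hN.le _)
  obtain ⟨N, hN⟩ := hkey
  refine ⟨N, SN N, ?_, ?_, ?_⟩
  · intro i hi
    exact ((Finset.mem_filter.1 hi).2).trans inter_subset_right
  · exact le_trans (measure_mono (diff_subset_diff_left hUsup)) hN
  · -- card bound
    have hdisj : (↑(SN N) : Set ℕ).Pairwise (Function.onFun (AEDisjoint volume) (D N)) := by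
      intro i _ j _ hij
      show volume (D N i ∩ D N j) = 0
      have hpos : (0:ℝ) < 2^N := by positivity
      show volume (Icc _ _ ∩ Icc _ _) = 0
      rw [Icc_inter_Icc, Real.volume_Icc, ENNReal.ofReal_eq_zero]
      have key : min (((i:ℝ)+1)/2^N) (((j:ℝ)+1)/2^N) ≤ max ((i:ℝ)/2^N) ((j:ℝ)/2^N) := by
        rcases Nat.lt_or_ge i j with h | h
        · have hc : ((i:ℝ)+1) ≤ (j:ℝ) := by exact_mod_cast h
          have h1 : ((i:ℝ)+1)/2^N ≤ (j:ℝ)/2^N := by gcongr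
          exact le_trans (min_le_left _ _) (h1.trans (le_max_right _ _))
        · have hj : j < i := lt_of_le_of_ne h (Ne.symm hij)
          have hc : ((j:ℝ)+1) ≤ (i:ℝ) := by exact_mod_cast hj
          have h1 : ((j:ℝ)+1)/2^N ≤ (i:ℝ)/2^N := by gcongr
          exact le_trans (min_le_right _ _) (h1.trans (le_max_left _ _))
      have : (((i:ℝ)+1)/2^N) ⊓ (((j:ℝ)+1)/2^N) ≤ ((i:ℝ)/2^N) ⊔ ((j:ℝ)/2^N) := key
      linarith [this]
    have hvolV : volume (V N) = (SN N).card * ENNReal.ofReal (1/2^N) := by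
      rw [hV]
      simp only
      rw [measure_biUnion_finset₀ hdisj (fun i _ => measurableSet_Icc.nullMeasurableSet)]
      have : ∀ i ∈ SN N, volume (D N i) = ENNReal.ofReal (1/2^N) := by
        intro i _
        rw [hD]; simp only [Real.volume_Icc]
        congr 1
        field_simp; ring
      rw [Finset.sum_congr rfl this, Finset.sum_const, nsmul_eq_mul]
    have hle : (((SN N).card : ℕ) : ENNReal) * ENNReal.ofReal (1/2^N) ≤ volume C + ENNReal.ofReal δ := by
      rw [← hvolV]; exact le_trans (measure_mono (hVsubU N)) hUvol.le
    have : ENNReal.ofReal ((SN N).card / 2^N) ≤ volume C + ENNReal.ofReal δ := by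
      rw [div_eq_mul_one_div, ENNReal.ofReal_mul (Nat.cast_nonneg _)]
      rw [ENNReal.ofReal_natCast]
      exact hle
    have hfin : volume C + ENNReal.ofReal δ ≠ ⊤ := by
      simp [hCfin.ne]
    have := (ENNReal.ofReal_le_iff_le_toReal hfin).1 this
    rw [ENNReal.toReal_add hCfin.ne ENNReal.ofReal_ne_top, ENNReal.toReal_ofReal hδ.le] at this
    linarith


lemma iterC {I : Set (Set ℕ)} (hI : IsIdeal I) (f : ℕ → ℝ → ℝ) (g : ℝ → ℝ) (ε : ℝ)
    (hstep : ∀ a b : ℝ, 0 ≤ a → a < b → b ≤ 1 →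
      ∃ M, M ⊆ Icc a b ∧ NullMeasurableSet M volume ∧
        volume (Icc a b \ M) < ENNReal.ofReal ((b - a)/2) ∧ badSet f g ε M ∈ I) :
    ∀ m : ℕ, ∃ M, M ⊆ Icc (0:ℝ) 1 ∧ NullMeasurableSet M volume ∧
      volume (Icc (0:ℝ) 1 \ M) ≤ ENNReal.ofReal ((3/4:ℝ)^m) ∧ badSet f g ε M ∈ I := by
  intro m
  induction m with
  | zero =>
    refine ⟨∅, empty_subset _, MeasurableSet.empty.nullMeasurableSet, ?_, ?_⟩
    · simp [Real.volume_Icc]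
    · have : badSet f g ε ∅ = ∅ := by
        ext k; simp [badSet]
      rw [this]; exact ideal_empty hI
  | succ m ih =>
    obtain ⟨M, hMsub, hMnull, hMvol, hMbad⟩ := ih
    by_cases h0 : volume (Icc (0:ℝ) 1 \ M) = 0
    · refine ⟨M, hMsub, hMnull, ?_, hMbad⟩
      rw [h0]; exact zero_le
    · have hfin : volume (Icc (0:ℝ) 1 \ M) ≠ ⊤ :=
        (lt_of_le_of_lt hMvol ENNReal.ofReal_lt_top).ne
      set c' : ℝ := (volume (Icc (0:ℝ) 1 \ M)).toReal with hc'
      have hc'pos : 0 < c' := ENNReal.toReal_pos h0 hfin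
      have hc'le : c' ≤ (3/4:ℝ)^m :=
        ENNReal.toReal_le_of_le_ofReal (by positivity) hMvol
      set δ : ℝ := c'/8 with hδdef
      have hδpos : 0 < δ := by positivity
      set C : Set ℝ := (Icc (0:ℝ) 1 \ M) ∩ Ioo 0 1 with hC
      have hCsub : C ⊆ Ioo 0 1 := inter_subset_right
      obtain ⟨N, S, hSsub, hSrem, hScard⟩ := dyadic_cover C hCsub hδpos
      have hCle : (volume C).toReal ≤ c' := by
        rw [hc']
        exact ENNReal.toReal_mono hfin (measure_mono inter_subset_left)
      -- apply hstep on each dyadic interval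
      have hablt : ∀ i : ℕ, ((i:ℝ)/2^N) < (((i:ℝ)+1)/2^N) := by
        intro i
        have hpos : (0:ℝ) < 2^N := by positivity
        exact (div_lt_div_iff_of_pos_right hpos).2 (by linarith)
      have hch : ∀ i : ℕ, ∃ M' : Set ℝ, i ∈ S →
          (M' ⊆ Icc ((i:ℝ)/2^N) (((i:ℝ)+1)/2^N) ∧ NullMeasurableSet M' volume ∧
           volume (Icc ((i:ℝ)/2^N) (((i:ℝ)+1)/2^N) \ M') <
             ENNReal.ofReal ((1/2^N : ℝ)/2) ∧ badSet f g ε M' ∈ I) := by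
        intro i
        by_cases hi : i ∈ S
        · have h1 : (0:ℝ) ≤ (i:ℝ)/2^N := by positivity
          have h2 : ((i:ℝ)/2^N) < (((i:ℝ)+1)/2^N) := hablt i
          have h3 : (((i:ℝ)+1)/2^N) ≤ 1 := by
            have := hSsub i hi (right_mem_Icc.2 (hablt i).le)
            exact this.2.le
          obtain ⟨M', hp1, hp2, hp3, hp4⟩ := hstep _ _ h1 h2 h3
          refine ⟨M', fun _ => ⟨hp1, hp2, ?_, hp4⟩⟩
          have : ((i:ℝ)+1)/2^N - (i:ℝ)/2^N = 1/2^N := by field_simp; ring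
          rwa [this] at hp3
        · exact ⟨∅, fun h => absurd h hi⟩
      choose ψ hψ using hch
      set Mnew : Set ℝ := M ∪ ⋃ i ∈ S, ψ i with hMnew
      refine ⟨Mnew, ?_, ?_, ?_, ?_⟩
      · rintro x (hx | hx)
        · exact hMsub hx
        · simp only [mem_iUnion] at hx
          obtain ⟨i, hi, hxi⟩ := hx
          have := (hψ i hi).1 hxi
          have h3 : (((i:ℝ)+1)/2^N) ≤ 1 := (hSsub i hi (right_mem_Icc.2 (hablt i).le)).2.le
          exact ⟨le_trans (by positivity) this.1, le_trans this.2 h3⟩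
      · exact hMnull.union (NullMeasurableSet.biUnion (Finset.countable_toSet _)
          fun i hi => (hψ i hi).2.1)
      · -- measure bound
        have hsubdiv : Icc (0:ℝ) 1 \ Mnew ⊆
            (C \ ⋃ i ∈ S, Icc ((i:ℝ)/2^N) (((i:ℝ)+1)/2^N)) ∪ ({0, 1} : Set ℝ) ∪
            (⋃ i ∈ S, (Icc ((i:ℝ)/2^N) (((i:ℝ)+1)/2^N) \ ψ i)) := by
          rintro x ⟨hx1, hx2⟩
          simp only [hMnew, mem_union, mem_iUnion, not_or, not_exists] at hx2
          obtain ⟨hxM, hxψ⟩ := hx2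
          by_cases hx01 : x = 0 ∨ x = 1
          · exact Or.inl (Or.inr (by rcases hx01 with h | h <;> simp [h]))
          · push_neg at hx01
            have hxC : x ∈ C := ⟨⟨hx1, hxM⟩, lt_of_le_of_ne hx1.1 (Ne.symm hx01.1),
              lt_of_le_of_ne hx1.2 hx01.2⟩
            by_cases hxV : x ∈ ⋃ i ∈ S, Icc ((i:ℝ)/2^N) (((i:ℝ)+1)/2^N)
            · simp only [mem_iUnion] at hxV
              obtain ⟨i, hi, hxi⟩ := hxV
              exact Or.inr (mem_iUnion.2 ⟨i, mem_iUnion.2 ⟨hi, hxi, hxψ i hi⟩⟩)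
            · exact Or.inl (Or.inl ⟨hxC, hxV⟩)
        refine le_trans (measure_mono hsubdiv) ?_
        refine le_trans (measure_union_le _ _) ?_
        have h01 : volume ({0, 1} : Set ℝ) = 0 :=
          ((Set.countable_singleton (1:ℝ)).insert 0).measure_zero _
        have hpart1 : volume ((C \ ⋃ i ∈ S, Icc ((i:ℝ)/2^N) (((i:ℝ)+1)/2^N)) ∪ ({0,1} : Set ℝ))
            ≤ ENNReal.ofReal δ := by
          refine le_trans (measure_union_le _ _) ?_
          rw [h01, add_zero]
          exact hSrem
        have hpart2 : volume (⋃ i ∈ S, (Icc ((i:ℝ)/2^N) (((i:ℝ)+1)/2^N) \ ψ i))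
            ≤ ENNReal.ofReal ((c' + 2*δ)/2) := by
          refine le_trans (measure_biUnion_finset_le _ _) ?_
          have hterm : ∀ i ∈ S, volume (Icc ((i:ℝ)/2^N) (((i:ℝ)+1)/2^N) \ ψ i)
              ≤ ENNReal.ofReal ((1/2^N : ℝ)/2) := fun i hi => (hψ i hi).2.2.1.le
          refine le_trans (Finset.sum_le_sum hterm) ?_
          rw [Finset.sum_const, nsmul_eq_mul]
          rw [← ENNReal.ofReal_natCast, ← ENNReal.ofReal_mul (by positivity)]
          refine ENNReal.ofReal_le_ofReal ?_
          have : (S.card : ℝ) * ((1/2^N)/2) = ((S.card : ℝ)/2^N)/2 := by ring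
          rw [this]
          have := hScard
          linarith [hCle]
        calc volume ((C \ ⋃ i ∈ S, Icc ((i:ℝ)/2^N) (((i:ℝ)+1)/2^N)) ∪ ({0,1} : Set ℝ))
              + volume (⋃ i ∈ S, (Icc ((i:ℝ)/2^N) (((i:ℝ)+1)/2^N) \ ψ i))
            ≤ ENNReal.ofReal δ + ENNReal.ofReal ((c' + 2*δ)/2) :=
              add_le_add hpart1 hpart2
          _ = ENNReal.ofReal (δ + (c' + 2*δ)/2) := by
              rw [← ENNReal.ofReal_add (by positivity) (by positivity)]
          _ ≤ ENNReal.ofReal ((3/4:ℝ)^(m+1)) := by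
              refine ENNReal.ofReal_le_ofReal ?_
              have h1 : δ + (c' + 2*δ)/2 = (3/4) * c' := by rw [hδdef]; ring
              rw [h1, pow_succ]
              calc (3/4:ℝ) * c' = c' * (3/4) := by ring
                _ ≤ (3/4:ℝ)^m * (3/4) := by nlinarith
      · -- bad set
        have hbsub : badSet f g ε Mnew ⊆ badSet f g ε M ∪ ⋃ i ∈ S, badSet f g ε (ψ i) := by
          rintro k ⟨t, ht, hk⟩
          rcases ht with ht | ht
          · exact Or.inl ⟨t, ht, hk⟩
          · simp only [mem_iUnion] at ht
            obtain ⟨i, hi, hti⟩ := ht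
            exact Or.inr (mem_iUnion.2 ⟨i, mem_iUnion.2 ⟨hi, t, hti, hk⟩⟩)
        exact ideal_subset hI hbsub
          (hI.1 _ _ hMbad (ideal_biUnion hI S fun i hi => (hψ i hi).2.2.2))


lemma egorov_of_H {I : Set (Set ℕ)} (hI : IsIdeal I)
    (H : ∀ h : ℕ → ℝ → ℝ, (∀ k, AEMeasurable (h k) (volume.restrict (Icc 0 1))) →
      IConvPtwise I h (fun _ => 0) →
      ∃ M, M ⊆ Icc (0:ℝ) 1 ∧ NullMeasurableSet M volume ∧
        volume (Icc 0 1 \ M) < ENNReal.ofReal (1/2) ∧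
        badSet h (fun _ => 0) (1/2) M ∈ I) : IsEgorov I := by
  intro f g hf hg hp η hη
  have hMj : ∀ j : ℕ, ∃ M, M ⊆ Icc (0:ℝ) 1 ∧ NullMeasurableSet M volume ∧
      volume (Icc (0:ℝ) 1 \ M) ≤ ENNReal.ofReal (η/2^(j+2)) ∧
      badSet f g (1/(2:ℝ)^(j+2)) M ∈ I := by
    intro j
    obtain ⟨m, hm⟩ := exists_pow_lt_of_lt_one (show (0:ℝ) < η/2^(j+2) by positivity)
      (by norm_num : (3/4:ℝ) < 1)
    obtain ⟨M, h1, h2, h3, h4⟩ := iterC hI f g _ (fun a b ha hab hb =>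
      subC hI hf hg hp H j ha hab hb) m
    exact ⟨M, h1, h2, h3.trans (ENNReal.ofReal_le_ofReal hm.le), h4⟩
  choose Mj hMjsub hMjnull hMjvol hMjbad using hMj
  refine ⟨⋂ j, Mj j, (iInter_subset _ 0).trans (hMjsub 0), NullMeasurableSet.iInter hMjnull,
    ?_, ?_⟩
  · have hd : Icc (0:ℝ) 1 \ ⋂ j, Mj j = ⋃ j, (Icc (0:ℝ) 1 \ Mj j) := by
      rw [diff_iInter]
    rw [hd]
    refine lt_of_le_of_lt (measure_iUnion_le _) ?_
    have hsum : ∑' j : ℕ, volume (Icc (0:ℝ) 1 \ Mj j)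
        ≤ ∑' j : ℕ, ENNReal.ofReal (η/2^(j+2)) := ENNReal.tsum_le_tsum hMjvol
    refine lt_of_le_of_lt hsum ?_
    have hterm : ∀ j : ℕ, ENNReal.ofReal (η/2^(j+2))
        = ENNReal.ofReal η * (2⁻¹ : ENNReal)^(j+2) := by
      intro j
      rw [div_eq_mul_one_div, ENNReal.ofReal_mul hη.le]
      congr 1
      rw [one_div, ENNReal.ofReal_inv_of_pos (by positivity), ← ENNReal.inv_pow]
      congr 1
      rw [ENNReal.ofReal_pow (by norm_num : (0:ℝ) ≤ 2)]
      norm_num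
    rw [tsum_congr hterm, ENNReal.tsum_mul_left]
    have hg2 : ∑' j : ℕ, (2⁻¹ : ENNReal)^(j+2) = 2⁻¹ := by
      rw [tsum_congr (fun j => pow_add (2⁻¹ : ENNReal) j 2)]
      rw [ENNReal.tsum_mul_right, ENNReal.tsum_geometric]
      rw [ENNReal.one_sub_inv_two]
      rw [inv_inv]
      rw [show ((2:ENNReal)⁻¹)^2 = 4⁻¹ by
        rw [← ENNReal.inv_pow]; norm_num]
      rw [show (4:ENNReal) = 2 * 2 by norm_num, ENNReal.mul_inv (by norm_num) (by norm_num)]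
      rw [← mul_assoc, ENNReal.mul_inv_cancel (by norm_num) (by norm_num), one_mul]
    rw [hg2, ← div_eq_mul_inv]
    exact ENNReal.half_lt_self (by simp [ENNReal.ofReal_eq_zero]; linarith) ENNReal.ofReal_ne_top
  · intro ε hε
    obtain ⟨j, hj⟩ := exists_pow_lt_of_lt_one hε (by norm_num : (1/2:ℝ) < 1)
    have hsub : {a : ℕ | ∃ t ∈ ⋂ j, Mj j, ε ≤ |f a t - g t|}
        ⊆ badSet f g (1/(2:ℝ)^(j+2)) (Mj j) := by
      rintro k ⟨t, ht, hk⟩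
      refine ⟨t, mem_iInter.1 ht j, le_trans ?_ hk⟩
      have h1 : (1:ℝ)/2^(j+2) ≤ (1/2:ℝ)^j := by
        rw [div_pow, one_pow]
        exact one_div_le_one_div_of_le (by positivity)
          (pow_le_pow_right₀ (by norm_num) (by omega))
      linarith
    exact ideal_subset hI hsub (hMjbad j)


lemma exists_strong_witness {I : Set (Set ℕ)} (hI : IsIdeal I) (hne : ¬ IsEgorov I) :
    ∃ f : ℕ → ℝ → ℝ, (∀ k, AEMeasurable (f k) (volume.restrict (Icc 0 1))) ∧
      IConvPtwise I f (fun _ => 0) ∧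
      ∀ M, M ⊆ Icc (0:ℝ) 1 → NullMeasurableSet M volume →
        volume (Icc (0:ℝ) 1 \ M) < ENNReal.ofReal (1/2) →
        badSet f (fun _ => 0) (1/2) M ∉ I := by
  by_contra hcon
  push_neg at hcon
  apply hne
  apply egorov_of_H hI
  intro h hmeas hptw
  obtain ⟨M, h1, h2, h3, h4⟩ := hcon h hmeas hptw
  exact ⟨M, h1, h2, h3, h4⟩



/-- If `{n : I_n is not Egorov} ∉ J`, then `∑^J_{n∈ω} I_n` is not Egorov. -/
theorem idealSumOver_not_egorov (J : Set (Set ℕ)) (I : ℕ → Set (Set ℕ))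
    (hJ : IsIdeal J) (hI : ∀ n : ℕ, IsIdeal (I n))
    (h : {n : ℕ | ¬ IsEgorov (I n)} ∉ J) : ¬ IsEgorov (idealSumOver J I) := by
  classical
  intro hEg
  set S : Set ℕ := {n : ℕ | ¬ IsEgorov (I n)} with hS
  have hwit : ∀ n : ℕ, ∃ f : ℕ → ℝ → ℝ, n ∈ S →
      ((∀ k, AEMeasurable (f k) (volume.restrict (Icc 0 1))) ∧
       IConvPtwise (I n) f (fun _ => 0) ∧
       ∀ M, M ⊆ Icc (0:ℝ) 1 → NullMeasurableSet M volume →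
         volume (Icc (0:ℝ) 1 \ M) < ENNReal.ofReal (1/2) →
         badSet f (fun _ => 0) (1/2) M ∉ I n) := by
    intro n
    by_cases hn : n ∈ S
    · obtain ⟨f, hf⟩ := exists_strong_witness (hI n) hn
      exact ⟨f, fun _ => hf⟩
    · exact ⟨fun _ _ => 0, fun hmem => absurd hmem hn⟩
  choose F hF using hwit
  set G : ℕ × ℕ → ℝ → ℝ := fun p => if p.1 ∈ S then F p.1 p.2 else (fun _ => 0) with hG
  have hGmeas : ∀ a : ℕ × ℕ, AEMeasurable (G a) (volume.restrict (Icc (0:ℝ) 1)) := by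
    intro a
    by_cases ha : a.1 ∈ S
    · simp only [hG, if_pos ha]
      exact (hF a.1 ha).1 a.2
    · simp only [hG, if_neg ha]
      exact aemeasurable_const
  have hGptw : IConvPtwise (idealSumOver J I) G (fun _ => 0) := by
    intro t ht ε hε
    show {n : ℕ | {k : ℕ | (n, k) ∈ {a : ℕ × ℕ | ε ≤ |G a t - (fun _ => 0) t|}} ∉ I n} ∈ J
    have hempty : {n : ℕ | {k : ℕ | (n, k) ∈ {a : ℕ × ℕ | ε ≤ |G a t - (fun _ => 0) t|}} ∉ I n}
        = ∅ := by
      ext n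
      simp only [mem_setOf_eq, mem_empty_iff_false, iff_false, not_not]
      by_cases hn : n ∈ S
      · have := (hF n hn).2.1 t ht ε hε
        have heq : {k : ℕ | ε ≤ |G (n, k) t - (fun _ : ℝ => 0) t|}
            = {k : ℕ | ε ≤ |F n k t - (fun _ : ℝ => 0) t|} := by
          ext k; simp only [mem_setOf_eq, hG, if_pos hn]
        rw [heq]; exact this
      · have heq : {k : ℕ | ε ≤ |G (n, k) t - (fun _ : ℝ => 0) t|} = ∅ := by
          ext k
          simp only [mem_setOf_eq, hG, if_neg hn, mem_empty_iff_false, iff_false, not_le,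
            sub_zero, abs_zero]
          exact hε
        rw [heq]; exact (hI n).2.2.1 ∅ finite_empty
    rw [hempty]
    exact hJ.2.2.1 ∅ finite_empty
  obtain ⟨M, hM1, hM2, hM3, hM4⟩ := hEg G (fun _ => 0) hGmeas aemeasurable_const hGptw
    (1/2) (by norm_num)
  have hB := hM4 (1/2) (by norm_num)
  have hsub : S ⊆ {n : ℕ |
      {k : ℕ | (n, k) ∈ {a : ℕ × ℕ | ∃ t ∈ M, (1/2 : ℝ) ≤ |G a t - (fun _ => 0) t|}} ∉ I n} := by
    intro n hn
    simp only [mem_setOf_eq]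
    have heq : {k : ℕ | ∃ t ∈ M, (1/2 : ℝ) ≤ |G (n, k) t - 0|}
        = badSet (F n) (fun _ => 0) (1/2) M := by
      ext k
      simp only [mem_setOf_eq, badSet, hG, if_pos hn]
    rw [heq]
    exact (hF n hn).2.2 M hM1 hM2 hM3
  exact h (hJ.2.1 S _ hsub hB)
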